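/- Let X be a nonnegative real random variable with 0 < E[X^2] < ∞ whose distribution has a Lebesgue density p satisfying p(t) = (1/E[X^2]) ∫_t^∞ s p(s) ds for all t > 0 (i.e. the law of X is a fixed point of the generalized zero bias transformation restricted to [0,∞)). Then there exists c ≥ 0 such that p(t) = c exp(-t^2 / (2 E[X^2])) for a.e. t > 0; in particular X has the half-normal distribution with parameter σ² = E[X²]. -/

import Mathlib

open MeasureTheory Real
open Set intervalIntegral

lemma aux_ode (σ2 : ℝ) (hσ2 : 0 < σ2) (p : ℝ → ℝ) (hp_meas : Measurable p)
    (a : ℝ)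
    (hfix : ∀ t : ℝ, a < t → p t = (1/σ2) * ∫ s in Set.Ioi t, s * p s)
    (hInt : ∀ t, a < t → IntegrableOn (fun s => s * p s) (Set.Ioi t)) :
    ∀ t, a < t → p t = (p (a+1) * Real.exp ((a+1)^2/(2*σ2))) * Real.exp (-t^2/(2*σ2)) := by
  set f : ℝ → ℝ := fun s => s * p s with hf_def
  have hf_meas : Measurable f := measurable_id.mul hp_meas
  have hII : ∀ u v : ℝ, a < u → a < v → IntervalIntegrable f volume u v := by
    intro u v hu hv
    rw [intervalIntegrable_iff]
    exact (hInt (min u v) (lt_min hu hv)).mono_set Set.Ioc_subset_Ioi_self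
  set K : ℝ := ∫ s in Set.Ioi (a+1), f s with hK_def
  set G : ℝ → ℝ := fun x => ∫ s in (a+1)..x, f s with hG_def
  have ha1 : a < a + 1 := by linarith
  have hform : ∀ t, a < t → p t = (1/σ2) * (K - G t) := by
    intro t ht
    rw [hfix t ht]
    congr 1
    rcases le_total t (a+1) with h | h
    · have hsplit : (∫ s in Set.Ioi t, f s)
          = (∫ s in Set.Ioc t (a+1), f s) + ∫ s in Set.Ioi (a+1), f s := by
        rw [← setIntegral_union (Set.Ioc_disjoint_Ioi le_rfl) measurableSet_Ioi
          ((hInt t ht).mono_set Set.Ioc_subset_Ioi_self) (hInt (a+1) ha1),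
          Set.Ioc_union_Ioi_eq_Ioi h]
      simp only [hG_def]
      rw [intervalIntegral.integral_symm, intervalIntegral.integral_of_le h, hK_def, hsplit]
      ring
    · have hsplit : (∫ s in Set.Ioi (a+1), f s)
          = (∫ s in Set.Ioc (a+1) t, f s) + ∫ s in Set.Ioi t, f s := by
        rw [← setIntegral_union (Set.Ioc_disjoint_Ioi le_rfl) measurableSet_Ioi
          ((hInt (a+1) ha1).mono_set Set.Ioc_subset_Ioi_self) (hInt t ht),
          Set.Ioc_union_Ioi_eq_Ioi h]
      simp only [hG_def]
      rw [intervalIntegral.integral_of_le h, hK_def, hsplit]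
      ring
  have hcontG : ∀ t, a < t → ContinuousAt G t := by
    intro t ht
    have h1 : (a + t)/2 < t := by linarith
    have h2 : a < (a + t)/2 := by linarith
    have hcw : ContinuousWithinAt G (Set.Icc ((a+t)/2) (t+1)) t := by
      apply intervalIntegral.continuousWithinAt_primitive (measure_singleton t)
      apply hII _ _ (lt_min ha1 h2) (lt_max_iff.mpr (Or.inl ha1))
    exact hcw.continuousAt (Icc_mem_nhds h1 (by linarith))
  have hcontp : ∀ t, a < t → ContinuousAt p t := by
    intro t ht
    have : ContinuousAt (fun x => (1/σ2) * (K - G x)) t :=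
      (continuousAt_const.mul (continuousAt_const.sub (hcontG t ht)))
    refine this.congr ?_
    filter_upwards [Ioi_mem_nhds ht] with x hx
    exact (hform x hx).symm
  have hderiv : ∀ t, a < t → HasDerivAt p (-(t / σ2) * p t) t := by
    intro t ht
    have hG' : HasDerivAt G (f t) t := by
      apply intervalIntegral.integral_hasDerivAt_right (hII _ _ ha1 ht)
        (hf_meas.stronglyMeasurable.stronglyMeasurableAtFilter)
      exact (continuousAt_id.mul (hcontp t ht))
    have : HasDerivAt (fun x => (1/σ2) * (K - G x)) ((1/σ2) * (0 - f t)) t :=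
      ((hasDerivAt_const t K).sub hG').const_mul _
    have heq : HasDerivAt p ((1/σ2) * (0 - f t)) t := by
      refine this.congr_of_eventuallyEq ?_
      filter_upwards [Ioi_mem_nhds ht] with x hx
      exact hform x hx
    convert heq using 1
    simp only [hf_def]
    ring
  set E : ℝ → ℝ := fun t => Real.exp (t^2/(2*σ2)) with hE_def
  set h : ℝ → ℝ := fun t => p t * E t with hh_def
  have hE' : ∀ t : ℝ, HasDerivAt E ((t/σ2) * E t) t := by
    intro t
    have h1 : HasDerivAt (fun t : ℝ => t^2/(2*σ2)) (2*t/(2*σ2)) t := by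
      simpa using (hasDerivAt_pow 2 t).div_const (2*σ2)
    have := h1.exp
    convert this using 1
    simp only [hE_def]
    field_simp
  have hderiv_h : ∀ t, a < t → HasDerivAt h 0 t := by
    intro t ht
    have := (hderiv t ht).mul (hE' t)
    exact this.congr_deriv (by ring)
  have hconst : ∀ t, a < t → h t = h (a+1) := by
    intro t ht
    rcases le_total t (a+1) with hle | hle
    · have := eq_of_has_deriv_right_eq (f := h) (f' := fun _ => (0:ℝ)) (g := fun _ => h t)
        (a := t) (b := a+1)
        (fun x hx => (hderiv_h x (lt_of_lt_of_le ht hx.1)).hasDerivWithinAt)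
        (fun x _ => (hasDerivAt_const x (h t)).hasDerivWithinAt)
        (fun x hx => ((hderiv_h x (lt_of_lt_of_le ht hx.1)).continuousAt).continuousWithinAt)
        continuousOn_const rfl
      exact (this (a+1) ⟨hle, le_refl _⟩).symm
    · have := eq_of_has_deriv_right_eq (f := h) (f' := fun _ => (0:ℝ)) (g := fun _ => h (a+1))
        (a := a+1) (b := t)
        (fun x hx => (hderiv_h x (lt_of_lt_of_le ha1 hx.1)).hasDerivWithinAt)
        (fun x _ => (hasDerivAt_const x (h (a+1))).hasDerivWithinAt)
        (fun x hx => ((hderiv_h x (lt_of_lt_of_le ha1 hx.1)).continuousAt).continuousWithinAt)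
        continuousOn_const rfl
      exact this t ⟨hle, le_refl _⟩
  intro t ht
  have hc := hconst t ht
  simp only [hh_def, hE_def] at hc
  rw [show -t^2/(2*σ2) = -(t^2/(2*σ2)) by ring]
  have hprod : Real.exp (t^2/(2*σ2)) * Real.exp (-(t^2/(2*σ2))) = 1 := by
    rw [← Real.exp_add]; simp
  calc p t = p t * (Real.exp (t^2/(2*σ2)) * Real.exp (-(t^2/(2*σ2)))) := by
        rw [hprod, mul_one]
    _ = (p t * Real.exp (t^2/(2*σ2))) * Real.exp (-(t^2/(2*σ2))) := by ring
    _ = (p (a+1) * Real.exp ((a+1)^2/(2*σ2))) * Real.exp (-(t^2/(2*σ2))) := by rw [hc]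

/-- If a nonnegative random variable `X` with `0 < E[X²] < ∞` has a Lebesgue
density `p` satisfying the fixed-point equation
`p(t) = (1/E[X²]) ∫_t^∞ s p(s) ds` for all `t > 0`, then there is `c ≥ 0` with
`p(t) = c exp(-t²/(2E[X²]))` for a.e. `t > 0`; in particular `X` is
half-normal with parameter `σ² = E[X²]`. -/
theorem stmt_18 {Ω : Type*} [MeasurableSpace Ω] (P : Measure Ω) [IsProbabilityMeasure P]
    (X : Ω → ℝ) (hX_meas : Measurable X) (hX_nonneg : ∀ ω, 0 ≤ X ω)
    (hX_sq_int : Integrable (fun ω => (X ω) ^ 2) P)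
    (hX_sq_pos : 0 < ∫ ω, (X ω) ^ 2 ∂P)
    (p : ℝ → ℝ) (hp_meas : Measurable p)
    (hp_law : Measure.map X P = volume.withDensity (fun t => ENNReal.ofReal (p t)))
    (hfix : ∀ t : ℝ, 0 < t →
      p t = (1 / ∫ ω, (X ω) ^ 2 ∂P) * ∫ s in Set.Ioi t, s * p s) :
    have σ2 : ℝ := ∫ ω, (X ω) ^ 2 ∂P
    (∃ c : ℝ, 0 ≤ c ∧ ∀ᵐ t : ℝ, 0 < t → p t = c * Real.exp (-t ^ 2 / (2 * σ2))) ∧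
      Measure.map X P = volume.withDensity (fun t => ENNReal.ofReal
        (Set.indicator (Set.Ici (0 : ℝ))
          (fun t => Real.sqrt (2 / (π * σ2)) * Real.exp (-t ^ 2 / (2 * σ2))) t)) := by
  show (∃ c : ℝ, 0 ≤ c ∧ ∀ᵐ t : ℝ, 0 < t →
      p t = c * Real.exp (-t ^ 2 / (2 * (∫ ω, (X ω) ^ 2 ∂P)))) ∧
    Measure.map X P = volume.withDensity (fun t => ENNReal.ofReal
      (Set.indicator (Set.Ici (0 : ℝ))
        (fun t => Real.sqrt (2 / (π * (∫ ω, (X ω) ^ 2 ∂P))) *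
          Real.exp (-t ^ 2 / (2 * (∫ ω, (X ω) ^ 2 ∂P)))) t))
  set σ2 : ℝ := ∫ ω, (X ω) ^ 2 ∂P with hσ2def
  have hσ2 : 0 < σ2 := hX_sq_pos
  set f : ℝ → ℝ := fun s => s * p s with hf_def
  have hf_meas : Measurable f := measurable_id.mul hp_meas
  -- basic measure facts
  have hprob : IsProbabilityMeasure (Measure.map X P) :=
    Measure.isProbabilityMeasure_map hX_meas.aemeasurable
  have hIio : Measure.map X P (Set.Iio 0) = 0 := by
    rw [Measure.map_apply hX_meas measurableSet_Iio]
    have : X ⁻¹' (Set.Iio 0) = ∅ := by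
      ext ω; simp [not_lt.mpr (hX_nonneg ω)]
    rw [this, measure_empty]
  have h0 : Measure.map X P {0} = 0 := by
    rw [hp_law]
    exact withDensity_absolutelyContinuous volume _ (measure_singleton 0)
  have hIic : Measure.map X P (Set.Iic 0) = 0 := by
    have hsub : Set.Iic (0:ℝ) ⊆ Set.Iio 0 ∪ {0} := by
      intro x hx
      rcases lt_or_eq_of_le (Set.mem_Iic.mp hx) with h | h
      · exact Or.inl h
      · exact Or.inr h
    exact measure_mono_null hsub (measure_union_null hIio h0)
  have hIoi : Measure.map X P (Set.Ioi 0) = 1 := by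
    have h1 : (1:ENNReal) = Measure.map X P (Set.Iic 0) + Measure.map X P (Set.Ioi 0) := by
      rw [← measure_union (Set.Iic_disjoint_Ioi le_rfl) measurableSet_Ioi,
        Set.Iic_union_Ioi, measure_univ]
    rw [hIic, zero_add] at h1
    exact h1.symm
  have hIoiD : Measure.map X P (Set.Ioi 0) = ∫⁻ t in Set.Ioi 0, ENNReal.ofReal (p t) := by
    rw [hp_law, withDensity_apply _ measurableSet_Ioi]
  -- contradiction helper
  have hcontra : ¬ (∀ t : ℝ, 0 < t → p t ≤ 0) := by
    intro h
    have hz : ∫⁻ t in Set.Ioi 0, ENNReal.ofReal (p t) = 0 := by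
      rw [setLIntegral_congr_fun measurableSet_Ioi
        ((fun t ht => by
          show ENNReal.ofReal (p t) = 0
          exact ENNReal.ofReal_eq_zero.mpr (h t ht)))]
      simp
    rw [hIoiD, hz] at hIoi
    exact zero_ne_one hIoi
  have hfix' : ∀ t : ℝ, 0 < t → p t = (1/σ2) * ∫ s in Set.Ioi t, f s := hfix
  -- Step: integrability of f on every Ioi t, t > 0
  have hA : ∀ t : ℝ, 0 < t → IntegrableOn f (Set.Ioi t) := by
    by_contra hcon
    push_neg at hcon
    obtain ⟨t0, ht0, ht0n⟩ := hcon
    have hmono : ∀ u v : ℝ, u ≤ v → IntegrableOn f (Set.Ioi u) → IntegrableOn f (Set.Ioi v) :=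
      fun u v huv hi => hi.mono_set (Set.Ioi_subset_Ioi huv)
    have hzero : ∀ t : ℝ, 0 < t → ¬ IntegrableOn f (Set.Ioi t) → p t = 0 := by
      intro t ht hn
      rw [hfix' t ht, integral_undef hn, mul_zero]
    by_cases hex : ∃ t1 : ℝ, 0 < t1 ∧ IntegrableOn f (Set.Ioi t1)
    · obtain ⟨t1, ht1, hInt1⟩ := hex
      set C : Set ℝ := {t | 0 < t ∧ ¬ IntegrableOn f (Set.Ioi t)} with hC_def
      have hC_mem : t0 ∈ C := ⟨ht0, ht0n⟩
      have hC_bdd : ∀ t ∈ C, t ≤ t1 := by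
        intro t ht
        by_contra hgt
        exact ht.2 (hmono t1 t (le_of_not_ge hgt) hInt1)
      have hbdd : BddAbove C := ⟨t1, fun t ht => hC_bdd t ht⟩
      set T : ℝ := sSup C with hT_def
      have hT_ge : t0 ≤ T := le_csSup hbdd hC_mem
      have hT_pos : 0 < T := lt_of_lt_of_le ht0 hT_ge
      have hInt_gt : ∀ t : ℝ, T < t → IntegrableOn f (Set.Ioi t) := by
        intro t ht
        by_contra hn
        have : t ∈ C := ⟨hT_pos.trans ht, hn⟩
        exact absurd (le_csSup hbdd this) (not_le.mpr ht)
      have hp_zero : ∀ t : ℝ, 0 < t → t < T → p t = 0 := by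
        intro t ht htT
        refine hzero t ht ?_
        intro hi
        have hub : ∀ c ∈ C, c ≤ t := by
          intro c hc
          by_contra hgt
          exact hc.2 (hmono t c (le_of_not_ge hgt) hi)
        exact absurd (csSup_le ⟨t0, hC_mem⟩ hub) (not_le.mpr htT)
      have hode := aux_ode σ2 hσ2 p hp_meas T
        (fun t ht => hfix' t (hT_pos.trans ht)) hInt_gt
      set c : ℝ := p (T+1) * Real.exp ((T+1)^2/(2*σ2)) with hc_def
      have h1 : IntegrableOn f (Set.Ioc t0 T) := by
        rw [integrableOn_Ioc_iff_integrableOn_Ioo]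
        have : Set.EqOn f (fun _ => (0:ℝ)) (Set.Ioo t0 T) := by
          intro s hs
          show s * p s = 0
          rw [hp_zero s (ht0.trans hs.1) hs.2, mul_zero]
        exact (integrableOn_congr_fun this measurableSet_Ioo).mpr
          (integrableOn_zero)
      have h2 : IntegrableOn f (Set.Ioc T (T+1)) := by
        have hc1 : Continuous fun s : ℝ => -s^2/(2*σ2) := ((continuous_pow 2).neg).div_const _
        have hcg : Continuous (fun s : ℝ => s * (c * Real.exp (-s^2/(2*σ2)))) :=
          continuous_id.mul (continuous_const.mul (Real.continuous_exp.comp hc1))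
        have : Set.EqOn f (fun s : ℝ => s * (c * Real.exp (-s^2/(2*σ2)))) (Set.Ioc T (T+1)) := by
          intro s hs
          show s * p s = _
          rw [hode s hs.1]
        exact (integrableOn_congr_fun this measurableSet_Ioc).mpr
          (hcg.integrableOn_Ioc)
      have h3 : IntegrableOn f (Set.Ioi (T+1)) := hInt_gt (T+1) (by linarith)
      have : IntegrableOn f (Set.Ioi t0) := by
        have hu1 : Set.Ioc T (T+1) ∪ Set.Ioi (T+1) = Set.Ioi T :=
          Set.Ioc_union_Ioi_eq_Ioi (by linarith)
        have hu2 : Set.Ioc t0 T ∪ Set.Ioi T = Set.Ioi t0 :=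
          Set.Ioc_union_Ioi_eq_Ioi hT_ge
        have hun := h1.union (h2.union h3)
        rwa [hu1, hu2] at hun
      exact ht0n this
    · push_neg at hex
      refine hcontra (fun t ht => ?_)
      exact le_of_eq (hzero t ht (hex t ht))
  -- ODE on (0, ∞)
  have hode := aux_ode σ2 hσ2 p hp_meas 0 (fun t ht => hfix' t ht) hA
  set c : ℝ := p (0+1) * Real.exp ((0+1)^2/(2*σ2)) with hc_def
  have hc_pos : 0 < c := by
    rcases lt_or_ge 0 c with h | h
    · exact h
    · exfalso
      refine hcontra (fun t ht => ?_)
      rw [hode t ht]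
      exact mul_nonpos_of_nonpos_of_nonneg h (Real.exp_nonneg _)
  -- normalization
  have hb : 0 < 1/(2*σ2) := by positivity
  have hrw : ∀ t : ℝ, -t^2/(2*σ2) = -(1/(2*σ2)) * t^2 := by intro t; ring
  have hgauss_int : IntegrableOn (fun t : ℝ => c * Real.exp (-(1/(2*σ2)) * t^2)) (Set.Ioi 0) :=
    ((integrable_exp_neg_mul_sq hb).const_mul c).integrableOn
  have hkey : (1:ENNReal) = ENNReal.ofReal
      (∫ t in Set.Ioi 0, c * Real.exp (-(1/(2*σ2)) * t^2)) := by
    rw [← hIoi, hIoiD]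
    rw [setLIntegral_congr_fun measurableSet_Ioi
      ((fun t ht => by
        show ENNReal.ofReal (p t) = ENNReal.ofReal (c * Real.exp (-(1/(2*σ2)) * t^2))
        rw [hode t ht, ← hrw t]))]
    rw [← ofReal_integral_eq_lintegral_ofReal hgauss_int
      (ae_of_all _ (fun t => mul_nonneg hc_pos.le (Real.exp_nonneg _)))]
  have hnorm : c * (Real.sqrt (π / (1/(2*σ2))) / 2) = 1 := by
    have := hkey
    rw [MeasureTheory.integral_const_mul, integral_gaussian_Ioi] at this
    have h1 : (0:ℝ) ≤ c * (Real.sqrt (π / (1/(2*σ2))) / 2) := by positivity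
    exact (ENNReal.ofReal_eq_one.mp this.symm)
  have hs_pos : 0 < Real.sqrt (π / (1/(2*σ2))) := by
    apply Real.sqrt_pos.mpr
    positivity
  have hc_val : c = Real.sqrt (2/(π*σ2)) := by
    have harg : (2/(π*σ2)) * (π / (1/(2*σ2))) = 4 := by
      field_simp
      ring
    have hmul : Real.sqrt (2/(π*σ2)) * Real.sqrt (π / (1/(2*σ2))) = 2 := by
      rw [← Real.sqrt_mul (by positivity), harg]
      rw [show (4:ℝ) = 2^2 by norm_num, Real.sqrt_sq (by norm_num)]
    have : c = 2 / Real.sqrt (π / (1/(2*σ2))) := by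
      field_simp at hnorm ⊢
      linarith
    rw [this, div_eq_iff hs_pos.ne']
    exact hmul.symm
  constructor
  · exact ⟨c, hc_pos.le, ae_of_all _ (fun t ht => hode t ht)⟩
  · -- negative part of density vanishes a.e.
    have hIioD : ∫⁻ t in Set.Iio 0, ENNReal.ofReal (p t) = 0 := by
      rw [← withDensity_apply _ measurableSet_Iio, ← hp_law]
      exact hIio
    have hae0 : ∀ᵐ t : ℝ ∂(volume.restrict (Set.Iio 0)), ENNReal.ofReal (p t) = 0 := by
      exact (lintegral_eq_zero_iff (hp_meas.ennreal_ofReal)).mp hIioD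
    have hae0' : ∀ᵐ t : ℝ, t < 0 → ENNReal.ofReal (p t) = 0 := by
      have := (ae_restrict_iff' measurableSet_Iio).mp hae0
      filter_upwards [this] with t ht htneg
      exact ht htneg
    have hne : ∀ᵐ t : ℝ, t ≠ (0:ℝ) := by
      have : volume ({(0:ℝ)} : Set ℝ) = 0 := measure_singleton 0
      rw [ae_iff]
      simpa using this
    rw [hp_law]
    apply withDensity_congr_ae
    filter_upwards [hae0', hne] with t htneg htne
    simp only [Set.indicator_apply]
    rcases lt_trichotomy t 0 with h | h | h
    · rw [htneg h, if_neg (by simpa using not_le.mpr h)]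
      simp
    · exact absurd h htne
    · rw [hode t h, if_pos (Set.mem_Ici.mpr h.le), hc_val]
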